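/- Let π be a strictly positive probability measure on ℕ and let V ∈ L²(π). Define E₀(φ) := ∑_{x≥0} (φ(x+1) − φ(x))² π(x) and Φ(φ) := 2⟨V,φ⟩_π − E₀(φ). Then sup{Φ(φ) : φ ∈ L²(π)} = ∑_{x=0}^{∞} π(x)^{−1} ( ∑_{y=0}^{x} V(y)π(y) )², as an equality in the extended reals [0,∞]; in particular the supremum is finite if and only if ∑_x π(x)^{−1}(∑_{y≤x} V(y)π(y))² < ∞. -/

import Mathlib

open scoped ENNReal
open Filter Finset

lemma aux_ofReal_tsum_ne_top {f : ℕ → ℝ} (hf : ∀ x, 0 ≤ f x) :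
    (∑' x, ENNReal.ofReal (f x)) ≠ ⊤ ↔ Summable f := by
  constructor
  · intro h
    have := ENNReal.summable_toReal h
    simpa [ENNReal.toReal_ofReal, hf] using this
  · intro h
    rw [← ENNReal.ofReal_tsum_of_nonneg hf h]
    exact ENNReal.ofReal_ne_top

lemma aux_ofReal_tsum_eq {f : ℕ → ℝ} (hf : ∀ x, 0 ≤ f x) (h : Summable f) :
    (∑' x, ENNReal.ofReal (f x)) = ENNReal.ofReal (∑' x, f x) :=
  (ENNReal.ofReal_tsum_of_nonneg hf h).symm

lemma aux_abel (V π φ : ℕ → ℝ) (N : ℕ) :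
    ∑ x ∈ Finset.range (N + 1), V x * φ x * π x =
      -(∑ k ∈ Finset.range N,
          (∑ y ∈ Finset.range (k + 1), V y * π y) * (φ (k + 1) - φ k)) +
        (∑ y ∈ Finset.range (N + 1), V y * π y) * φ N := by
  induction N with
  | zero => simp; ring
  | succ n ih =>
      rw [Finset.sum_range_succ (n := n + 1), ih,
        Finset.sum_range_succ
          (f := fun k => (∑ y ∈ Finset.range (k + 1), V y * π y) * (φ (k + 1) - φ k)),
        Finset.sum_range_succ (f := fun y => V y * π y) (n := n + 1)]
      ring

lemma aux_amgm (x y : ℝ) : |x| * |y| ≤ (x ^ 2 + y ^ 2) / 2 := by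
  nlinarith [sq_nonneg (|x| - |y|), sq_abs x, sq_abs y, abs_nonneg x, abs_nonneg y]

lemma aux_summable_mul {a b : ℕ → ℝ} (ha : Summable fun k => a k ^ 2)
    (hb : Summable fun k => b k ^ 2) : Summable fun k => |a k * b k| := by
  apply Summable.of_nonneg_of_le (fun k => abs_nonneg _)
    (fun k => ?_) ((ha.add hb).div_const 2)
  rw [abs_mul]; exact aux_amgm _ _

lemma aux_cs_tsum {a b : ℕ → ℝ} (ha : Summable fun k => a k ^ 2)
    (hb : Summable fun k => b k ^ 2) :
    (∑' k, a k * b k) ^ 2 ≤ (∑' k, a k ^ 2) * (∑' k, b k ^ 2) := by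
  set X := ∑' k, a k ^ 2 with hX
  set Y := ∑' k, b k ^ 2 with hY
  have hX0 : 0 ≤ X := tsum_nonneg fun k => sq_nonneg _
  have hY0 : 0 ≤ Y := tsum_nonneg fun k => sq_nonneg _
  have hsum := aux_summable_mul ha hb
  have hsum' : Summable fun k => ‖a k * b k‖ := by
    simpa only [Real.norm_eq_abs] using hsum
  have h1 : |∑' k, a k * b k| ≤ ∑' k, |a k * b k| := by
    have := norm_tsum_le_tsum_norm hsum'
    simpa only [Real.norm_eq_abs] using this
  have h2 : ∑' k, |a k * b k| ≤ Real.sqrt (X * Y) := by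
    apply Summable.tsum_le_of_sum_le hsum
    intro s
    have hcs := Finset.sum_mul_sq_le_sq_mul_sq s (fun k => |a k|) (fun k => |b k|)
    simp only [sq_abs] at hcs
    have h3 : ∑ i ∈ s, a i ^ 2 ≤ X := Summable.sum_le_tsum s (fun k _ => sq_nonneg _) ha
    have h4 : ∑ i ∈ s, b i ^ 2 ≤ Y := Summable.sum_le_tsum s (fun k _ => sq_nonneg _) hb
    have h5 : (∑ i ∈ s, |a i| * |b i|) ^ 2 ≤ X * Y := by
      refine hcs.trans (mul_le_mul h3 h4 (Finset.sum_nonneg fun k _ => sq_nonneg _) hX0)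
    calc ∑ i ∈ s, |a i * b i| = ∑ i ∈ s, |a i| * |b i| := by simp [abs_mul]
      _ ≤ Real.sqrt (X * Y) := by
          rw [← Real.sqrt_sq (Finset.sum_nonneg fun k _ => mul_nonneg (abs_nonneg _) (abs_nonneg _))]
          exact Real.sqrt_le_sqrt h5
  calc (∑' k, a k * b k) ^ 2 = |∑' k, a k * b k| ^ 2 := (sq_abs _).symm
    _ ≤ Real.sqrt (X * Y) ^ 2 := by
        apply pow_le_pow_left₀ (abs_nonneg _) (h1.trans h2)
    _ = X * Y := Real.sq_sqrt (mul_nonneg hX0 hY0)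

lemma aux_tail_pos {π : ℕ → ℝ} (hπpos : ∀ x, 0 < π x) (hπs : Summable π) (m : ℕ) :
    0 < ∑' k, π (k + m) := by
  have hs : Summable fun k => π (k + m) := (summable_nat_add_iff m).2 hπs
  have h0 : π (0 + m) ≤ ∑' k, π (k + m) := Summable.le_tsum hs 0 (fun k _ => (hπpos _).le)
  have := hπpos (0 + m)
  linarith

lemma aux_tail_succ {π : ℕ → ℝ} (hπs : Summable π) (m : ℕ) :
    ∑' k, π (k + m) = π m + ∑' k, π (k + (m + 1)) := by
  have hs : Summable fun k => π (k + m) := (summable_nat_add_iff m).2 hπs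
  rw [Summable.tsum_eq_zero_add hs]
  congr 1
  · simp
  · apply tsum_congr; intro k; congr 1; omega

lemma aux_frequently {π : ℕ → ℝ} (hπpos : ∀ x, 0 < π x) (hπs : Summable π)
    {φ : ℕ → ℝ} (hφ : Summable fun x => φ x ^ 2 * π x) (M : ℕ) :
    ∃ n, M ≤ n ∧ φ n ^ 2 * (∑' k, π (k + (n + 1))) ≤ 1 := by
  by_contra hcon
  push_neg at hcon
  set tail := fun m => ∑' k, π (k + m) with htail
  set C := ∑' x, φ x ^ 2 * π x with hC
  have hkey : ∀ n, M ≤ n →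
      Real.log (tail n) - Real.log (tail (n + 1)) ≤ φ n ^ 2 * π n := by
    intro n hn
    have h1 : (1:ℝ) < φ n ^ 2 * tail (n + 1) := hcon n hn
    have htp : 0 < tail (n + 1) := aux_tail_pos hπpos hπs _
    have htp0 : 0 < tail n := aux_tail_pos hπpos hπs _
    have hlog : Real.log (tail n / tail (n + 1)) ≤ tail n / tail (n + 1) - 1 :=
      Real.log_le_sub_one_of_pos (div_pos htp0 htp)
    rw [Real.log_div htp0.ne' htp.ne'] at hlog
    have heq : tail n / tail (n + 1) - 1 = π n / tail (n + 1) := by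
      have hts : tail n = π n + tail (n + 1) := aux_tail_succ hπs n
      rw [hts]
      field_simp
      ring
    rw [heq] at hlog
    refine hlog.trans ?_
    rw [div_le_iff₀ htp]
    calc π n = 1 * π n := (one_mul _).symm
      _ ≤ (φ n ^ 2 * tail (n + 1)) * π n :=
          mul_le_mul_of_nonneg_right h1.le (hπpos n).le
      _ = (φ n ^ 2 * π n) * tail (n + 1) := by ring
  have hbound : ∀ N : ℕ, Real.log (tail M) - Real.log (tail (M + N)) ≤ C := by
    intro N
    have htel : ∑ i ∈ Finset.range N,
        (Real.log (tail (M + i)) - Real.log (tail (M + i + 1))) =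
        Real.log (tail M) - Real.log (tail (M + N)) := by
      have := Finset.sum_range_sub' (fun i => Real.log (tail (M + i))) N
      simpa [add_assoc] using this
    calc Real.log (tail M) - Real.log (tail (M + N))
        = ∑ i ∈ Finset.range N,
            (Real.log (tail (M + i)) - Real.log (tail (M + i + 1))) := htel.symm
      _ ≤ ∑ i ∈ Finset.range N, φ (M + i) ^ 2 * π (M + i) := by
          apply Finset.sum_le_sum
          intro i _
          exact hkey (M + i) (Nat.le_add_right _ _)
      _ ≤ C := by
          have heq2 : ∑ i ∈ Finset.range N, φ (M + i) ^ 2 * π (M + i)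
              = ∑ n ∈ Finset.Ico M (M + N), φ n ^ 2 * π n := by
            rw [Finset.sum_Ico_eq_sum_range]
            simp
          rw [heq2]
          exact Summable.sum_le_tsum _ (fun n _ => mul_nonneg (sq_nonneg _) (hπpos n).le) hφ
  have htails : Tendsto (fun m : ℕ => tail m) atTop (nhds 0) := by
    exact_mod_cast tendsto_sum_nat_add π
  have hto : Tendsto (fun N : ℕ => Real.log (tail (M + N))) atTop atBot := by
    apply Real.tendsto_log_nhdsNE_zero.comp
    apply tendsto_nhdsWithin_of_tendsto_nhds_of_eventually_within
    · exact htails.comp ((tendsto_add_atTop_nat M).congr (fun n => by omega))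
    · refine Eventually.of_forall fun N => ?_
      simp only [Set.mem_compl_iff, Set.mem_singleton_iff]
      exact (aux_tail_pos hπpos hπs _).ne'
  obtain ⟨N, hN⟩ := (hto.eventually (eventually_lt_atBot
      (Real.log (tail M) - C - 1))).exists
  have := hbound N
  linarith

section
variable {π V φ : ℕ → ℝ}

lemma aux_sq_sqrt_mul (h : 0 ≤ π) (f : ℕ → ℝ) (k : ℕ) :
    (f k * Real.sqrt (π k)) ^ 2 = f k ^ 2 * π k := by
  rw [mul_pow, Real.sq_sqrt (h k)]

lemma aux_summable_Vφπ (hπpos : ∀ x, 0 < π x)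
    (hV : Summable fun x => V x ^ 2 * π x) (hφ : Summable fun x => φ x ^ 2 * π x) :
    Summable fun x => V x * φ x * π x := by
  have h : ∀ k, 0 ≤ π k := fun k => (hπpos k).le
  have ha : Summable fun k => (V k * Real.sqrt (π k)) ^ 2 := by
    simpa only [aux_sq_sqrt_mul h] using hV
  have hb : Summable fun k => (φ k * Real.sqrt (π k)) ^ 2 := by
    simpa only [aux_sq_sqrt_mul h] using hφ
  have := (aux_summable_mul ha hb).of_abs
  refine this.congr fun k => ?_
  have : Real.sqrt (π k) * Real.sqrt (π k) = π k := Real.mul_self_sqrt (h k)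
  linear_combination V k * φ k * this

lemma aux_summable_Vπ (hπpos : ∀ x, 0 < π x) (hπs : Summable π)
    (hV : Summable fun x => V x ^ 2 * π x) :
    Summable fun x => V x * π x := by
  have h : ∀ k, 0 ≤ π k := fun k => (hπpos k).le
  have ha : Summable fun k => (V k * Real.sqrt (π k)) ^ 2 := by
    simpa only [aux_sq_sqrt_mul h] using hV
  have hb : Summable fun k => (Real.sqrt (π k)) ^ 2 := by
    refine hπs.congr fun k => ?_
    rw [Real.sq_sqrt (h k)]
  have := (aux_summable_mul ha hb).of_abs
  refine this.congr fun k => ?_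
  have : Real.sqrt (π k) * Real.sqrt (π k) = π k := Real.mul_self_sqrt (h k)
  linear_combination V k * this

lemma aux_summable_Fd (hπpos : ∀ x, 0 < π x)
    (hS : Summable fun x => (π x)⁻¹ * (∑ y ∈ Finset.range (x + 1), V y * π y) ^ 2)
    (hE : Summable fun x => (φ (x + 1) - φ x) ^ 2 * π x) :
    Summable fun k =>
      (∑ y ∈ Finset.range (k + 1), V y * π y) * (φ (k + 1) - φ k) := by
  have h : ∀ k, 0 ≤ π k := fun k => (hπpos k).le
  set F := fun k => ∑ y ∈ Finset.range (k + 1), V y * π y with hF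
  have ha : Summable fun k => (F k * (Real.sqrt (π k))⁻¹) ^ 2 := by
    refine hS.congr fun k => ?_
    rw [mul_pow, inv_pow, Real.sq_sqrt (h k)]
    ring
  have hb : Summable fun k => ((φ (k + 1) - φ k) * Real.sqrt (π k)) ^ 2 := by
    refine hE.congr fun k => ?_
    rw [mul_pow, Real.sq_sqrt (h k)]
  have := (aux_summable_mul ha hb).of_abs
  refine this.congr fun k => ?_
  have hs : Real.sqrt (π k) ≠ 0 := (Real.sqrt_pos.2 (hπpos k)).ne'
  field_simp
  ring

set_option maxHeartbeats 2000000 in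
lemma aux_inner_identity (hπpos : ∀ x, 0 < π x) (hπs : Summable π)
    (hV : Summable fun x => V x ^ 2 * π x)
    (hG : ∑' x, V x * π x = 0)
    (hφ : Summable fun x => φ x ^ 2 * π x)
    (hE : Summable fun x => (φ (x + 1) - φ x) ^ 2 * π x)
    (hS : Summable fun x => (π x)⁻¹ * (∑ y ∈ Finset.range (x + 1), V y * π y) ^ 2) :
    ∑' x, V x * φ x * π x =
      ∑' k, -((∑ y ∈ Finset.range (k + 1), V y * π y) * (φ (k + 1) - φ k)) := by
  have h : ∀ k, 0 ≤ π k := fun k => (hπpos k).le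
  set F := fun k => ∑ y ∈ Finset.range (k + 1), V y * π y with hF
  set d := fun k => φ (k + 1) - φ k with hd
  have hVφπ := aux_summable_Vφπ hπpos hV hφ
  have hVπ := aux_summable_Vπ hπpos hπs hV
  have hFd := aux_summable_Fd hπpos hS hE
  set I := ∑' x, V x * φ x * π x with hI
  set Q := ∑' k, F k * d k with hQ
  -- boundary converges to I + Q
  have hPlim : Tendsto (fun N => ∑ x ∈ Finset.range (N + 1), V x * φ x * π x)
      atTop (nhds I) :=
    hVφπ.hasSum.tendsto_sum_nat.comp (tendsto_add_atTop_nat 1)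
  have hQlim : Tendsto (fun N => ∑ k ∈ Finset.range N, F k * d k) atTop (nhds Q) :=
    hFd.hasSum.tendsto_sum_nat
  have hblim : Tendsto (fun N => F N * φ N) atTop (nhds (I + Q)) := by
    have : ∀ N, F N * φ N = (∑ x ∈ Finset.range (N + 1), V x * φ x * π x) +
        ∑ k ∈ Finset.range N, F k * d k := by
      intro N
      have := aux_abel V π φ N
      simp only [hF, hd]
      linarith [this]
    exact Tendsto.congr (fun N => (this N).symm) (hPlim.add hQlim)
  -- F N = - tail of Vπ
  have hFtail : ∀ N, F N = -(∑' k, V (k + (N + 1)) * π (k + (N + 1))) := by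
    intro N
    have := Summable.sum_add_tsum_nat_add (f := fun x => V x * π x) (N + 1) hVπ
    rw [hG] at this
    simp only [hF]
    linarith [this]
  -- bound b_N^2
  have hbnd : ∀ N, (F N * φ N) ^ 2 ≤
      (∑' k, V (k + (N + 1)) ^ 2 * π (k + (N + 1))) *
        ((∑' k, π (k + (N + 1))) * φ N ^ 2) := by
    intro N
    have haN : Summable fun k => (V (k + (N + 1)) * Real.sqrt (π (k + (N + 1)))) ^ 2 := by
      refine ((summable_nat_add_iff (N + 1)).2 hV :
        Summable fun k => V (k + (N + 1)) ^ 2 * π (k + (N + 1))).congr fun k => ?_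
      rw [mul_pow, Real.sq_sqrt (h _)]
    have hbN : Summable fun k => (Real.sqrt (π (k + (N + 1)))) ^ 2 := by
      refine ((summable_nat_add_iff (N + 1)).2 hπs :
        Summable fun k => π (k + (N + 1))).congr fun k => ?_
      rw [Real.sq_sqrt (h _)]
    have hcs := aux_cs_tsum haN hbN
    have heq1 : (∑' k, V (k + (N + 1)) * Real.sqrt (π (k + (N + 1))) *
        Real.sqrt (π (k + (N + 1)))) = ∑' k, V (k + (N + 1)) * π (k + (N + 1)) := by
      apply tsum_congr; intro k
      rw [mul_assoc, Real.mul_self_sqrt (h _)]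
    have heq2 : (∑' k, (V (k + (N + 1)) * Real.sqrt (π (k + (N + 1)))) ^ 2)
        = ∑' k, V (k + (N + 1)) ^ 2 * π (k + (N + 1)) := by
      apply tsum_congr; intro k
      rw [mul_pow, Real.sq_sqrt (h _)]
    have heq3 : (∑' k, (Real.sqrt (π (k + (N + 1)))) ^ 2) = ∑' k, π (k + (N + 1)) := by
      apply tsum_congr; intro k
      rw [Real.sq_sqrt (h _)]
    rw [heq1, heq2, heq3] at hcs
    have hFN := hFtail N
    calc (F N * φ N) ^ 2 = (∑' k, V (k + (N + 1)) * π (k + (N + 1))) ^ 2 * φ N ^ 2 := by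
          rw [hFN]; ring
      _ ≤ ((∑' k, V (k + (N + 1)) ^ 2 * π (k + (N + 1))) * (∑' k, π (k + (N + 1)))) * φ N ^ 2 := by
          apply mul_le_mul_of_nonneg_right hcs (sq_nonneg _)
      _ = _ := by ring
  -- limit of (F N φ N)^2 is (I+Q)^2 ; show ≤ ε for all ε
  have hL2 : (I + Q) ^ 2 = 0 := by
    by_contra hne
    have hLpos : 0 < (I + Q) ^ 2 := lt_of_le_of_ne (sq_nonneg _) (Ne.symm hne)
    set ε := (I + Q) ^ 2 / 2 with hε
    have hεpos : 0 < ε := by positivity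
    -- eventually (F N φ N)^2 > ε
    have hev1 : ∀ᶠ N in atTop, ε < (F N * φ N) ^ 2 := by
      have : Tendsto (fun N => (F N * φ N) ^ 2) atTop (nhds ((I + Q) ^ 2)) := by
        simpa only [pow_two] using (hblim.mul hblim)
      apply this.eventually (eventually_gt_nhds (by linarith))
    -- eventually tail of V^2π < ε
    have hev2 : ∀ᶠ N in atTop, (∑' k, V (k + (N + 1)) ^ 2 * π (k + (N + 1))) < ε := by
      have ht : Tendsto (fun N : ℕ => ∑' k, V (k + N) ^ 2 * π (k + N))
          atTop (nhds 0) := tendsto_sum_nat_add (fun x => V x ^ 2 * π x)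
      have ht2 := ht.comp (tendsto_add_atTop_nat 1)
      exact ht2.eventually (eventually_lt_nhds hεpos)
    obtain ⟨M, hM⟩ := (hev1.and hev2).exists_forall_of_atTop
    obtain ⟨n, hnM, hn1⟩ := aux_frequently hπpos hπs hφ M
    obtain ⟨h1, h2⟩ := hM n hnM
    have hb := hbnd n
    have htp : 0 ≤ ∑' k, V (k + (n + 1)) ^ 2 * π (k + (n + 1)) :=
      tsum_nonneg fun k => mul_nonneg (sq_nonneg _) (h _)
    have : (F n * φ n) ^ 2 ≤ ε := by
      calc (F n * φ n) ^ 2 ≤ (∑' k, V (k + (n + 1)) ^ 2 * π (k + (n + 1))) *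
            ((∑' k, π (k + (n + 1))) * φ n ^ 2) := hb
        _ ≤ (∑' k, V (k + (n + 1)) ^ 2 * π (k + (n + 1))) * 1 := by
            apply mul_le_mul_of_nonneg_left _ htp
            calc (∑' k, π (k + (n + 1))) * φ n ^ 2
                = φ n ^ 2 * (∑' k, π (k + (n + 1))) := by ring
              _ ≤ 1 := hn1
        _ ≤ ε := by rw [mul_one]; exact h2.le
    linarith
  have hIQ : I + Q = 0 := by
    have := sq_eq_zero_iff.1 hL2
    exact this
  have : I = -Q := by linarith
  rw [this, hQ, ← tsum_neg]
end

lemma aux_lower {π V : ℕ → ℝ} (hπpos : ∀ x, 0 < π x) (hπs : Summable π)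
    (hV : Summable fun x => V x ^ 2 * π x) (hG : ∑' x, V x * π x = 0) (N : ℕ) :
    ∃ φ : ℕ → ℝ, (Summable fun x => φ x ^ 2 * π x) ∧
      (∑' x, V x * φ x * π x =
        ∑ x ∈ Finset.range N, (π x)⁻¹ * (∑ y ∈ Finset.range (x + 1), V y * π y) ^ 2) ∧
      ((∑' x : ℕ, ENNReal.ofReal ((φ (x + 1) - φ x) ^ 2 * π x)) =
        ENNReal.ofReal
          (∑ x ∈ Finset.range N, (π x)⁻¹ * (∑ y ∈ Finset.range (x + 1), V y * π y) ^ 2)) := by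
  set F := fun k => ∑ y ∈ Finset.range (k + 1), V y * π y with hF
  set φ := fun k : ℕ => -∑ j ∈ Finset.range (min k N), F j / π j with hφdef
  have hconst : ∀ k, N ≤ k → φ k = φ N := by
    intro k hk
    simp only [hφdef, min_eq_right hk, min_self]
  have hd_lt : ∀ k, k < N → φ (k + 1) - φ k = -(F k / π k) := by
    intro k hk
    simp only [hφdef, min_eq_left hk.le, min_eq_left (Nat.succ_le_of_lt hk),
      Finset.sum_range_succ]
    ring
  have hd_ge : ∀ k, N ≤ k → φ (k + 1) - φ k = 0 := by
    intro k hk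
    rw [hconst k hk, hconst (k + 1) (hk.trans (Nat.le_succ k))]
    ring
  have hbdd : ∀ k, |φ k| ≤ ∑ j ∈ Finset.range N, |F j / π j| := by
    intro k
    simp only [hφdef, abs_neg]
    calc |∑ j ∈ Finset.range (min k N), F j / π j|
        ≤ ∑ j ∈ Finset.range (min k N), |F j / π j| := Finset.abs_sum_le_sum_abs _ _
      _ ≤ ∑ j ∈ Finset.range N, |F j / π j| := by
          apply Finset.sum_le_sum_of_subset_of_nonneg
          · exact Finset.range_subset_range.2 (min_le_right _ _)
          · intro i _ _; exact abs_nonneg _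
  set B := ∑ j ∈ Finset.range N, |F j / π j| with hB
  have hφ2 : Summable fun x => φ x ^ 2 * π x := by
    apply Summable.of_nonneg_of_le
      (fun x => mul_nonneg (sq_nonneg _) (hπpos x).le)
      (fun x => ?_) (hπs.mul_left (B ^ 2))
    apply mul_le_mul_of_nonneg_right _ (hπpos x).le
    calc φ x ^ 2 = |φ x| ^ 2 := (sq_abs _).symm
      _ ≤ B ^ 2 := by
          apply pow_le_pow_left₀ (abs_nonneg _) (hbdd x)
  refine ⟨φ, hφ2, ?_, ?_⟩
  · -- inner product computation
    have hVφπ := aux_summable_Vφπ hπpos hV hφ2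
    have hVπ := aux_summable_Vπ hπpos hπs hV
    have hsplit := Summable.sum_add_tsum_nat_add (f := fun x => V x * φ x * π x) (N + 1) hVφπ
    have htail : (∑' k, V (k + (N + 1)) * φ (k + (N + 1)) * π (k + (N + 1)))
        = φ N * (∑' k, V (k + (N + 1)) * π (k + (N + 1))) := by
      rw [← tsum_mul_left]
      apply tsum_congr; intro k
      rw [hconst (k + (N + 1)) (by omega)]
      ring
    have htail0 : (∑' k, V (k + (N + 1)) * π (k + (N + 1))) = -(F N) := by
      have := Summable.sum_add_tsum_nat_add (f := fun x => V x * π x) (N + 1) hVπ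
      rw [hG] at this
      simp only [hF]
      linarith
    have habel := aux_abel V π φ N
    change _ = -(∑ k ∈ Finset.range N, F k * (φ (k + 1) - φ k)) + F N * φ N at habel
    have hdsum : ∑ k ∈ Finset.range N, F k * (φ (k + 1) - φ k)
        = -∑ x ∈ Finset.range N, (π x)⁻¹ * F x ^ 2 := by
      rw [← Finset.sum_neg_distrib]
      apply Finset.sum_congr rfl
      intro k hk
      rw [hd_lt k (Finset.mem_range.1 hk)]
      field_simp
    have : ∑' x, V x * φ x * π x =
        (∑ x ∈ Finset.range (N + 1), V x * φ x * π x) + φ N * -(F N) := by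
      rw [← hsplit, htail, htail0]
    rw [this, habel, hdsum]
    ring
  · -- E₀ computation
    have hsupp : ∀ x ∉ Finset.range N, ENNReal.ofReal ((φ (x + 1) - φ x) ^ 2 * π x) = 0 := by
      intro x hx
      rw [hd_ge x (by simpa using hx)]
      simp
    rw [tsum_eq_sum hsupp]
    rw [← ENNReal.ofReal_sum_of_nonneg
      (fun i _ => mul_nonneg (sq_nonneg _) (hπpos i).le)]
    congr 1
    apply Finset.sum_congr rfl
    intro k hk
    rw [hd_lt k (Finset.mem_range.1 hk)]
    have := (hπpos k).ne'
    field_simp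
    ring

lemma aux_upper {π V φ : ℕ → ℝ} (hπpos : ∀ x, 0 < π x) (hπs : Summable π)
    (hV : Summable fun x => V x ^ 2 * π x)
    (hG : ∑' x, V x * π x = 0)
    (hφ : Summable fun x => φ x ^ 2 * π x)
    (hE : Summable fun x => (φ (x + 1) - φ x) ^ 2 * π x)
    (hS : Summable fun x => (π x)⁻¹ * (∑ y ∈ Finset.range (x + 1), V y * π y) ^ 2) :
    2 * (∑' x, V x * φ x * π x) - (∑' x, (φ (x + 1) - φ x) ^ 2 * π x) ≤
      ∑' x, (π x)⁻¹ * (∑ y ∈ Finset.range (x + 1), V y * π y) ^ 2 := by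
  set F := fun k => ∑ y ∈ Finset.range (k + 1), V y * π y with hF
  set d := fun k => φ (k + 1) - φ k with hd
  have hFd : Summable fun k => F k * d k := aux_summable_Fd hπpos hS hE
  have hI := aux_inner_identity hπpos hπs hV hG hφ hE hS
  have h2I : 2 * (∑' x, V x * φ x * π x) = ∑' k, (-2) * (F k * d k) := by
    rw [hI, ← tsum_mul_left]
    apply tsum_congr; intro k
    simp only [hF, hd]
    ring
  rw [h2I]
  have hcomb : (∑' k, (-2) * (F k * d k)) - (∑' x, d x ^ 2 * π x)
      = ∑' k, ((-2) * (F k * d k) - d k ^ 2 * π k) := by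
    rw [← Summable.tsum_sub (hFd.mul_left (-2)) hE]
  rw [hcomb]
  apply Summable.tsum_le_tsum _ ((hFd.mul_left (-2)).sub hE) hS
  intro k
  have hp := hπpos k
  have h1 : 0 ≤ (F k + d k * π k) ^ 2 * (π k)⁻¹ :=
    mul_nonneg (sq_nonneg _) (by positivity)
  have e1 : (F k + d k * π k) ^ 2 * (π k)⁻¹
      = (π k)⁻¹ * F k ^ 2 + 2 * (F k * d k) + d k ^ 2 * π k := by
    field_simp
    ring
  linarith

/-- For a strictly positive probability measure `π` on `ℕ` and `V ∈ L²(π)`,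
with `E₀(φ) = ∑ₓ (φ(x+1)-φ(x))²π(x)` and `Φ(φ) = 2⟨V,φ⟩_π - E₀(φ)` (valued in the extended
reals), one has `sup {Φ(φ) : φ ∈ L²(π)} = ∑ₓ π(x)⁻¹ (∑_{y=0}^x V(y)π(y))²` as an equality in
`[0,∞]`; in particular the supremum is finite iff `∑ₓ π(x)⁻¹(∑_{y≤x} V(y)π(y))² < ∞`. -/
theorem stmt16 (π : ℕ → ℝ) (hπpos : ∀ x, 0 < π x) (hπ1 : ∑' x, π x = 1)
    (V : ℕ → ℝ) (hV : Summable fun x => V x ^ 2 * π x) :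
    sSup {r : EReal | ∃ φ : ℕ → ℝ, (Summable fun x => φ x ^ 2 * π x) ∧
        r = ((2 * ∑' x, V x * φ x * π x : ℝ) : EReal) -
          ((∑' x : ℕ, ENNReal.ofReal ((φ (x + 1) - φ x) ^ 2 * π x) : ℝ≥0∞) : EReal)} =
      ((∑' x : ℕ, ENNReal.ofReal
          ((π x)⁻¹ * (∑ y ∈ Finset.range (x + 1), V y * π y) ^ 2) : ℝ≥0∞) : EReal) ∧
    (sSup {r : EReal | ∃ φ : ℕ → ℝ, (Summable fun x => φ x ^ 2 * π x) ∧
        r = ((2 * ∑' x, V x * φ x * π x : ℝ) : EReal) -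
          ((∑' x : ℕ, ENNReal.ofReal ((φ (x + 1) - φ x) ^ 2 * π x) : ℝ≥0∞) : EReal)} < ⊤ ↔
      Summable fun x : ℕ => (π x)⁻¹ * (∑ y ∈ Finset.range (x + 1), V y * π y) ^ 2) := by
  have hπs : Summable π := by
    by_contra h
    rw [tsum_eq_zero_of_not_summable h] at hπ1
    norm_num at hπ1
  have hterm0 : ∀ x, 0 ≤ (π x)⁻¹ * (∑ y ∈ Finset.range (x + 1), V y * π y) ^ 2 :=
    fun x => mul_nonneg (inv_nonneg.2 (hπpos x).le) (sq_nonneg _)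
  have key : sSup {r : EReal | ∃ φ : ℕ → ℝ, (Summable fun x => φ x ^ 2 * π x) ∧
        r = ((2 * ∑' x, V x * φ x * π x : ℝ) : EReal) -
          ((∑' x : ℕ, ENNReal.ofReal ((φ (x + 1) - φ x) ^ 2 * π x) : ℝ≥0∞) : EReal)} =
      ((∑' x : ℕ, ENNReal.ofReal
          ((π x)⁻¹ * (∑ y ∈ Finset.range (x + 1), V y * π y) ^ 2) : ℝ≥0∞) : EReal) := by
    by_cases hG : ∑' x, V x * π x = 0
    · -- case G = 0
      apply le_antisymm
      · apply sSup_le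
        rintro r ⟨φ, hφ2, rfl⟩
        by_cases hEs : Summable fun x => (φ (x + 1) - φ x) ^ 2 * π x
        · by_cases hSs : Summable fun x : ℕ =>
              (π x)⁻¹ * (∑ y ∈ Finset.range (x + 1), V y * π y) ^ 2
          · have hE0 : ∀ x, 0 ≤ (φ (x + 1) - φ x) ^ 2 * π x :=
              fun x => mul_nonneg (sq_nonneg _) (hπpos x).le
            rw [aux_ofReal_tsum_eq hE0 hEs, aux_ofReal_tsum_eq hterm0 hSs,
              EReal.coe_ennreal_ofReal, EReal.coe_ennreal_ofReal,
              max_eq_left (tsum_nonneg hE0), max_eq_left (tsum_nonneg hterm0),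
              ← EReal.coe_sub, EReal.coe_le_coe_iff]
            exact aux_upper hπpos hπs hV hG hφ2 hEs hSs
          · have : (∑' x : ℕ, ENNReal.ofReal
                ((π x)⁻¹ * (∑ y ∈ Finset.range (x + 1), V y * π y) ^ 2)) = ⊤ := by
              by_contra h
              exact hSs ((aux_ofReal_tsum_ne_top hterm0).1 h)
            rw [this, EReal.coe_ennreal_top]
            exact le_top
        · have : (∑' x : ℕ, ENNReal.ofReal ((φ (x + 1) - φ x) ^ 2 * π x)) = ⊤ := by
            by_contra h
            exact hEs ((aux_ofReal_tsum_ne_top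
              (fun x => mul_nonneg (sq_nonneg _) (hπpos x).le)).1 h)
          rw [this, EReal.coe_ennreal_top, EReal.sub_top]
          exact bot_le
      · -- lower bound
        have hmem : ∀ N : ℕ,
            ((∑ x ∈ Finset.range N,
              (π x)⁻¹ * (∑ y ∈ Finset.range (x + 1), V y * π y) ^ 2 : ℝ) : EReal) ∈
            {r : EReal | ∃ φ : ℕ → ℝ, (Summable fun x => φ x ^ 2 * π x) ∧
              r = ((2 * ∑' x, V x * φ x * π x : ℝ) : EReal) -
                ((∑' x : ℕ, ENNReal.ofReal ((φ (x + 1) - φ x) ^ 2 * π x) : ℝ≥0∞) : EReal)} := by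
          intro N
          obtain ⟨φ, hφ2, hI, hE⟩ := aux_lower hπpos hπs hV hG N
          refine ⟨φ, hφ2, ?_⟩
          rw [hI, hE, EReal.coe_ennreal_ofReal,
            max_eq_left (Finset.sum_nonneg fun x _ => hterm0 x), ← EReal.coe_sub]
          norm_cast
          ring
        by_cases hSs : Summable fun x : ℕ =>
            (π x)⁻¹ * (∑ y ∈ Finset.range (x + 1), V y * π y) ^ 2
        · rw [aux_ofReal_tsum_eq hterm0 hSs, EReal.coe_ennreal_ofReal,
            max_eq_left (tsum_nonneg hterm0)]
          apply le_of_forall_lt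
          intro c hc
          induction c using EReal.rec with
          | bot =>
              refine lt_of_lt_of_le ?_ (le_sSup (hmem 0))
              simp
          | coe x =>
              rw [EReal.coe_lt_coe_iff] at hc
              have hps := hSs.hasSum.tendsto_sum_nat
              obtain ⟨N, hN⟩ := (hps.eventually (eventually_gt_nhds hc)).exists
              refine lt_of_lt_of_le ?_ (le_sSup (hmem N))
              exact_mod_cast hN
          | top => exact absurd hc (by simp)
        · have : (∑' x : ℕ, ENNReal.ofReal
              ((π x)⁻¹ * (∑ y ∈ Finset.range (x + 1), V y * π y) ^ 2)) = ⊤ := by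
            by_contra h
            exact hSs ((aux_ofReal_tsum_ne_top hterm0).1 h)
          rw [this, EReal.coe_ennreal_top, top_le_iff, EReal.eq_top_iff_forall_lt]
          intro y
          have hdiv := (not_summable_iff_tendsto_nat_atTop_of_nonneg hterm0).1 hSs
          obtain ⟨N, hN⟩ := (hdiv.eventually (eventually_gt_atTop y)).exists
          refine lt_of_lt_of_le ?_ (le_sSup (hmem N))
          exact_mod_cast hN
    · -- case G ≠ 0
      have hVπ := aux_summable_Vπ hπpos hπs hV
      have hnotsum : ¬ Summable fun x : ℕ =>
          (π x)⁻¹ * (∑ y ∈ Finset.range (x + 1), V y * π y) ^ 2 := by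
        intro hs
        have h1 : Tendsto (fun x : ℕ =>
            ((π x)⁻¹ * (∑ y ∈ Finset.range (x + 1), V y * π y) ^ 2) * π x)
            atTop (nhds 0) := by
          simpa using hs.tendsto_atTop_zero.mul hπs.tendsto_atTop_zero
        have h2 : ∀ x : ℕ, ((π x)⁻¹ * (∑ y ∈ Finset.range (x + 1), V y * π y) ^ 2) * π x
            = (∑ y ∈ Finset.range (x + 1), V y * π y) ^ 2 := by
          intro x
          have hne := (hπpos x).ne'
          field_simp
        rw [tendsto_congr h2] at h1
        have hps := hVπ.hasSum.tendsto_sum_nat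
        have hFG : Tendsto (fun N : ℕ => ∑ y ∈ Finset.range (N + 1), V y * π y)
            atTop (nhds (∑' x, V x * π x)) :=
          hps.comp (tendsto_add_atTop_nat 1)
        have h3 : Tendsto (fun N : ℕ => (∑ y ∈ Finset.range (N + 1), V y * π y) ^ 2)
            atTop (nhds ((∑' x, V x * π x) ^ 2)) := by
          simpa only [pow_two] using hFG.mul hFG
        have := tendsto_nhds_unique h1 h3
        exact hG (sq_eq_zero_iff.1 this.symm)
      have htop : (∑' x : ℕ, ENNReal.ofReal
          ((π x)⁻¹ * (∑ y ∈ Finset.range (x + 1), V y * π y) ^ 2)) = ⊤ := by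
        by_contra h
        exact hnotsum ((aux_ofReal_tsum_ne_top hterm0).1 h)
      rw [htop, EReal.coe_ennreal_top, EReal.eq_top_iff_forall_lt]
      intro y
      set G := ∑' x, V x * π x with hGdef
      set c := (|y| + 1) / (2 * G) with hc
      have hmem : ((2 * (c * G) : ℝ) : EReal) ∈
          {r : EReal | ∃ φ : ℕ → ℝ, (Summable fun x => φ x ^ 2 * π x) ∧
            r = ((2 * ∑' x, V x * φ x * π x : ℝ) : EReal) -
              ((∑' x : ℕ, ENNReal.ofReal ((φ (x + 1) - φ x) ^ 2 * π x) : ℝ≥0∞) : EReal)} := by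
        refine ⟨fun _ => c, by simpa using hπs.mul_left (c ^ 2), ?_⟩
        have hI : (∑' x, V x * c * π x) = c * G := by
          rw [hGdef, ← tsum_mul_left]
          apply tsum_congr; intro x; ring
        have hEz : (∑' x : ℕ, ENNReal.ofReal ((c - c) ^ 2 * π x)) = 0 := by
          simp
        rw [hI, hEz]
        simp
      refine lt_of_lt_of_le ?_ (le_sSup hmem)
      rw [EReal.coe_lt_coe_iff]
      have h2cG : 2 * (c * G) = |y| + 1 := by
        rw [hc]
        field_simp
      rw [h2cG]
      have := abs_nonneg y
      have := le_abs_self y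
      linarith
  refine ⟨key, ?_⟩
  rw [key]
  rw [lt_top_iff_ne_top]
  rw [ne_eq, EReal.coe_ennreal_eq_top_iff]
  rw [← ne_eq]
  exact aux_ofReal_tsum_ne_top hterm0
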